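/- arXiv:1605.08095 — 2 statements merged into one kernel-verified Lean document; each statement's English description precedes it below -/
import Mathlib

section
/- Let $f(z) = \sum_{k=0}^{\infty} a_{k+1}(2k+n) z^{2k}$ where $a_k = \frac{2^{2k}B_{2k}}{(2k)!}$ and $n \geq 1$. Then the radius of convergence of this power series is exactly $\pi$. -/
open Real

/-- The coefficients `a_k = 2^(2k) B_(2k) / (2k)!` of the Laurent series of
`coth z - 1/z`. -/
noncomputable def langevinCoeff (k : ℕ) : ℝ :=
  2 ^ (2 * k) * ((bernoulli (2 * k) : ℚ) : ℝ) / (Nat.factorial (2 * k) : ℝ)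

lemma langevinCoeff_abs (k : ℕ) :
    ∃ S : ℝ, 1 ≤ S ∧ S ≤ 2 ∧
      |langevinCoeff (k + 1)| = 2 * S / Real.pi ^ (2 * (k + 1)) := by
  have hk : (k + 1) ≠ 0 := Nat.succ_ne_zero k
  have h := hasSum_zeta_nat hk
  set S : ℝ := (-1 : ℝ) ^ (k + 1 + 1) * (2 : ℝ) ^ (2 * (k + 1) - 1) * π ^ (2 * (k + 1)) *
      bernoulli (2 * (k + 1)) / ((2 * (k + 1)).factorial : ℝ) with hSdef
  have hS1 : (1 : ℝ) ≤ S := by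
    have := le_hasSum h 1 (fun i _ => by positivity)
    simpa using this
  have hS2 : S ≤ 2 := by
    have h2 := hasSum_zeta_two
    have hle : S ≤ π ^ 2 / 6 := by
      refine hasSum_le (fun i => ?_) h h2
      rcases Nat.eq_zero_or_pos i with rfl | hi
      · simp
      · have h1i : (1 : ℝ) ≤ (i : ℝ) := by exact_mod_cast hi
        have : (i : ℝ) ^ 2 ≤ (i : ℝ) ^ (2 * (k + 1)) := by
          apply pow_le_pow_right₀ h1i; omega
        apply one_div_le_one_div_of_le (by positivity) this
    nlinarith [Real.pi_lt_d2, Real.pi_pos]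
  refine ⟨S, hS1, hS2, ?_⟩
  have hSpos : 0 < S := lt_of_lt_of_le one_pos hS1
  have hSabs : S = 2 ^ (2 * (k + 1) - 1) * π ^ (2 * (k + 1)) *
      |((bernoulli (2 * (k + 1)) : ℚ) : ℝ)| / ((2 * (k + 1)).factorial : ℝ) := by
    rw [← abs_of_pos hSpos, hSdef]
    rw [abs_div, abs_mul, abs_mul, abs_mul]
    rw [abs_pow, abs_neg, abs_one, one_pow, one_mul]
    rw [abs_of_pos (by positivity : (0:ℝ) < (2:ℝ) ^ (2*(k+1)-1)),
      abs_of_pos (by positivity : (0:ℝ) < π ^ (2*(k+1))),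
      Nat.abs_cast]
  have hpi : (0 : ℝ) < π ^ (2 * (k + 1)) := by positivity
  rw [langevinCoeff, abs_div, abs_mul, abs_pow, abs_two, Nat.abs_cast]
  rw [hSabs]
  simp only [show 2*(k+1)-1 = 2*k+1 from by omega, show 2*(k+1) = 2*k+2 from by omega, pow_succ]
  field_simp
  ring_nf
  rw [show 2 + k*2 - 1 = k*2 + 1 from by omega]
  ring

theorem fKernel_series_radius (n : ℕ) (hn : 1 ≤ n) :
    (∀ z : ℝ, |z| < Real.pi →
      Summable (fun k : ℕ => langevinCoeff (k + 1) * (2 * (k : ℝ) + n) * z ^ (2 * k))) ∧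
    (∀ z : ℝ, Real.pi < |z| →
      ¬ Summable (fun k : ℕ => langevinCoeff (k + 1) * (2 * (k : ℝ) + n) * z ^ (2 * k))) := by
  have hπ := Real.pi_pos
  have hπ0 : (π : ℝ) ≠ 0 := Real.pi_ne_zero
  have hn' : (1 : ℝ) ≤ (n : ℝ) := by exact_mod_cast hn
  have key : ∀ (z : ℝ) (k : ℕ), ∃ S : ℝ, 1 ≤ S ∧ S ≤ 2 ∧
      |langevinCoeff (k + 1) * (2 * (k : ℝ) + n) * z ^ (2 * k)| =
        2 * S / π ^ 2 * (2 * (k : ℝ) + n) * (z ^ 2 / π ^ 2) ^ k := by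
    intro z k
    obtain ⟨S, hS1, hS2, hSe⟩ := langevinCoeff_abs k
    refine ⟨S, hS1, hS2, ?_⟩
    rw [abs_mul, abs_mul, abs_of_nonneg (show (0:ℝ) ≤ 2 * (k : ℝ) + n by positivity),
      pow_mul, abs_pow, abs_of_nonneg (sq_nonneg z), hSe, div_pow]
    rw [show 2 * (k + 1) = 2 * k + 2 from by omega, pow_add, ← pow_mul]
    field_simp
    rw [← pow_mul]
    ring
  constructor
  · intro z hz
    set r : ℝ := z ^ 2 / π ^ 2 with hr
    have hr1 : r < 1 := by
      rw [hr, div_lt_one (by positivity)]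
      nlinarith [sq_abs z, abs_nonneg z]
    have hr0 : 0 ≤ r := by positivity
    have hg : Summable (fun k : ℕ => (8 / π ^ 2) * ((k : ℝ) ^ 1 * r ^ k) +
        ((4 * n) / π ^ 2) * r ^ k) := by
      apply Summable.add
      · exact (summable_pow_mul_geometric_of_norm_lt_one (R := ℝ) 1 (r := r)
          (by rwa [Real.norm_eq_abs, abs_of_nonneg hr0])).mul_left _
      · exact (summable_geometric_of_lt_one hr0 hr1).mul_left _
    refine Summable.of_abs (hg.of_nonneg_of_le (fun k => abs_nonneg _) fun k => ?_)
    obtain ⟨S, hS1, hS2, hSe⟩ := key z k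
    rw [hSe]
    have hrk : (0:ℝ) ≤ r ^ k := by positivity
    have h1 : 2 * S / π ^ 2 * (2 * (k : ℝ) + n) * r ^ k ≤
        2 * 2 / π ^ 2 * (2 * (k : ℝ) + n) * r ^ k := by gcongr
    calc 2 * S / π ^ 2 * (2 * (k : ℝ) + n) * r ^ k
        ≤ 2 * 2 / π ^ 2 * (2 * (k : ℝ) + n) * r ^ k := h1
      _ = (8 / π ^ 2) * ((k : ℝ) ^ 1 * r ^ k) + ((4 * n) / π ^ 2) * r ^ k := by ring
  · intro z hz hsum
    have hb : ∀ k : ℕ, 2 / π ^ 2 ≤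
        |langevinCoeff (k + 1) * (2 * (k : ℝ) + n) * z ^ (2 * k)| := by
      intro k
      obtain ⟨S, hS1, hS2, hSe⟩ := key z k
      rw [hSe]
      have hr1 : (1:ℝ) ≤ z ^ 2 / π ^ 2 := by
        rw [le_div_iff₀ (by positivity)]
        nlinarith [sq_abs z, abs_nonneg z]
      have hrk : (1:ℝ) ≤ (z ^ 2 / π ^ 2) ^ k := one_le_pow₀ hr1
      have h2 : (1:ℝ) ≤ 2 * (k : ℝ) + n := by
        have : (0:ℝ) ≤ 2 * (k:ℝ) := by positivity
        linarith
      calc 2 / π ^ 2 = 2 * 1 / π ^ 2 * 1 * 1 := by ring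
        _ ≤ 2 * S / π ^ 2 * (2 * (k : ℝ) + n) * (z ^ 2 / π ^ 2) ^ k := by gcongr
    have h0 : Filter.Tendsto (fun k : ℕ => |langevinCoeff (k + 1) * (2 * (k : ℝ) + n) * z ^ (2 * k)|) Filter.atTop (nhds 0) := by
      simpa using hsum.tendsto_atTop_zero.abs
    have hev := h0.eventually_lt_const (show (0:ℝ) < 2 / π ^ 2 by positivity)
    obtain ⟨k, hk⟩ := hev.exists
    exact absurd (hb k) (not_le.mpr hk)
end

section
/- The derivative of the Langevin function, $\mathcal{L}'(x) = 1/x^2 - 1/\sinh^2(x)$ for $x \neq 0$ (with $\mathcal{L}'(0) = 1/3$), satisfies $0 < \mathcal{L}'(x) \leq 1/3$ for all real $x$. -/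
open Real Set

/-- Generic helper: if `F 0 = 0` and `F` has nonnegative derivative `F'` on `[0,∞)`,
then `F x ≥ 0` for `x ≥ 0`. -/
lemma aux_nonneg_of_deriv {F F' : ℝ → ℝ} (hd : ∀ x, HasDerivAt F (F' x) x)
    (h0 : F 0 = 0) (hF' : ∀ x, 0 ≤ x → 0 ≤ F' x) : ∀ x, 0 ≤ x → 0 ≤ F x := by
  intro x hx
  have hmono : MonotoneOn F (Ici (0:ℝ)) := by
    apply monotoneOn_of_deriv_nonneg (convex_Ici 0)
    · exact fun y _ => (hd y).continuousAt.continuousWithinAt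
    · exact fun y _ => ((hd y).differentiableAt).differentiableWithinAt
    · intro y hy
      rw [interior_Ici] at hy
      rw [(hd y).deriv]
      exact hF' y (le_of_lt hy)
  have := hmono (self_mem_Ici) hx hx
  rwa [h0] at this

lemma auxA : ∀ x : ℝ, 0 ≤ x → Real.sinh x ≤ x * Real.cosh x := by
  have h := aux_nonneg_of_deriv (F := fun x => x * Real.cosh x - Real.sinh x)
    (F' := fun x => x * Real.sinh x)
    (fun x => by
      have h1 := ((hasDerivAt_id' (x := x)).mul (Real.hasDerivAt_cosh x)).sub
        (Real.hasDerivAt_sinh x)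
      exact h1.congr_deriv (by push_cast; ring))
    (by simp)
    (fun x hx => mul_nonneg hx (Real.sinh_nonneg_iff.2 hx))
  intro x hx
  have := h x hx
  linarith

lemma auxB : ∀ x : ℝ, 0 ≤ x → Real.cosh x ≤ 1 + x ^ 2 / 2 * Real.cosh x := by
  have h := aux_nonneg_of_deriv (F := fun x => 1 + x ^ 2 / 2 * Real.cosh x - Real.cosh x)
    (F' := fun x => x * Real.cosh x + x ^ 2 / 2 * Real.sinh x - Real.sinh x)
    (fun x => by
      have h1 := ((hasDerivAt_const x (1:ℝ)).add
        ((((hasDerivAt_pow 2 x).div_const 2)).mul (Real.hasDerivAt_cosh x))).sub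
        (Real.hasDerivAt_cosh x)
      exact h1.congr_deriv (by push_cast; ring))
    (by norm_num)
    (fun x hx => by
      have hA := auxA x hx
      have hs : (0:ℝ) ≤ Real.sinh x := Real.sinh_nonneg_iff.2 hx
      have : (0:ℝ) ≤ x ^ 2 / 2 * Real.sinh x := by positivity
      linarith)
  intro x hx
  have := h x hx
  linarith

lemma auxC : ∀ x : ℝ, 0 ≤ x → Real.sinh x ≤ x + x ^ 3 / 6 * Real.cosh x := by
  have h := aux_nonneg_of_deriv (F := fun x => x + x ^ 3 / 6 * Real.cosh x - Real.sinh x)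
    (F' := fun x => 1 + (x ^ 2 / 2 * Real.cosh x + x ^ 3 / 6 * Real.sinh x) - Real.cosh x)
    (fun x => by
      have h1 := ((hasDerivAt_id' (x := x)).add
        ((((hasDerivAt_pow 3 x).div_const 6)).mul (Real.hasDerivAt_cosh x))).sub
        (Real.hasDerivAt_sinh x)
      exact h1.congr_deriv (by push_cast; ring))
    (by norm_num)
    (fun x hx => by
      have hB := auxB x hx
      have hs : (0:ℝ) ≤ Real.sinh x := Real.sinh_nonneg_iff.2 hx
      have : (0:ℝ) ≤ x ^ 3 / 6 * Real.sinh x := by positivity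
      linarith)
  intro x hx
  have := h x hx
  linarith

lemma auxD : ∀ x : ℝ, 0 ≤ x → Real.cosh x ≤ 1 + x ^ 2 / 2 + x ^ 4 / 24 * Real.cosh x := by
  have h := aux_nonneg_of_deriv
    (F := fun x => 1 + x ^ 2 / 2 + x ^ 4 / 24 * Real.cosh x - Real.cosh x)
    (F' := fun x => x + (x ^ 3 / 6 * Real.cosh x + x ^ 4 / 24 * Real.sinh x) - Real.sinh x)
    (fun x => by
      have h1 := (((hasDerivAt_const x (1:ℝ)).add ((hasDerivAt_pow 2 x).div_const 2)).add
        ((((hasDerivAt_pow 4 x).div_const 24)).mul (Real.hasDerivAt_cosh x))).sub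
        (Real.hasDerivAt_cosh x)
      exact h1.congr_deriv (by push_cast; ring))
    (by norm_num)
    (fun x hx => by
      have hC := auxC x hx
      have hs : (0:ℝ) ≤ Real.sinh x := Real.sinh_nonneg_iff.2 hx
      have : (0:ℝ) ≤ x ^ 4 / 24 * Real.sinh x := by positivity
      linarith)
  intro x hx
  have := h x hx
  linarith

lemma auxE : ∀ x : ℝ, 0 ≤ x → Real.sinh x ≤ x + x ^ 3 / 6 + x ^ 5 / 120 * Real.cosh x := by
  have h := aux_nonneg_of_deriv
    (F := fun x => x + x ^ 3 / 6 + x ^ 5 / 120 * Real.cosh x - Real.sinh x)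
    (F' := fun x => 1 + x ^ 2 / 2 + (x ^ 4 / 24 * Real.cosh x + x ^ 5 / 120 * Real.sinh x)
      - Real.cosh x)
    (fun x => by
      have h1 := (((hasDerivAt_id' (x := x)).add ((hasDerivAt_pow 3 x).div_const 6)).add
        ((((hasDerivAt_pow 5 x).div_const 120)).mul (Real.hasDerivAt_cosh x))).sub
        (Real.hasDerivAt_sinh x)
      exact h1.congr_deriv (by push_cast; ring))
    (by norm_num)
    (fun x hx => by
      have hD := auxD x hx
      have hs : (0:ℝ) ≤ Real.sinh x := Real.sinh_nonneg_iff.2 hx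
      have : (0:ℝ) ≤ x ^ 5 / 120 * Real.sinh x := by positivity
      linarith)
  intro x hx
  have := h x hx
  linarith

/-- The pure polynomial inequality, in `u = x²`. -/
lemma aux_poly (u : ℝ) (hu : 0 ≤ u) (hu3 : u ≤ 3) :
    ((1 + u / 6) * (1 - u ^ 2 / 24) + u ^ 2 / 120 * (1 + u / 2)) ^ 2 * (3 - u)
      ≤ 3 * (1 - u ^ 2 / 24) ^ 2 := by
  have hQ : (0:ℝ) ≤ 25920 + 1440 * u - 1557 * u ^ 2 - 48 * u ^ 3 + 21 * u ^ 4 + u ^ 5 := by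
    nlinarith [mul_nonneg hu (sub_nonneg.2 hu3),
      mul_nonneg (mul_nonneg hu (sub_nonneg.2 hu3)) (by linarith : (0:ℝ) ≤ 3 + u),
      pow_nonneg hu 4, pow_nonneg hu 5]
  nlinarith [mul_nonneg (sq_nonneg u) hQ]

/-- The key inequality: `sinh² x · (3 - x²) ≤ 3 x²` for `0 ≤ x` with `x² ≤ 3`. -/
lemma aux_key (x : ℝ) (hx : 0 ≤ x) (hx3 : x ^ 2 ≤ 3) :
    Real.sinh x ^ 2 * (3 - x ^ 2) ≤ 3 * x ^ 2 := by
  set s := Real.sinh x with hs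
  set c := Real.cosh x with hc
  have hD : (0:ℝ) < 1 - x ^ 4 / 24 := by nlinarith
  have hE := auxE x hx
  have hDc : c * (1 - x ^ 4 / 24) ≤ 1 + x ^ 2 / 2 := by
    have := auxD x hx; nlinarith [Real.one_le_cosh x]
  have hsnn : 0 ≤ s := Real.sinh_nonneg_iff.2 hx
  -- bound s * D
  have h1 : s * (1 - x ^ 4 / 24) ≤ (x + x ^ 3 / 6) * (1 - x ^ 4 / 24)
      + x ^ 5 / 120 * (1 + x ^ 2 / 2) := by
    have h5 : (0:ℝ) ≤ x ^ 5 / 120 := by positivity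
    nlinarith [mul_le_mul_of_nonneg_left hDc h5]
  have h2 : ((x + x ^ 3 / 6) * (1 - x ^ 4 / 24) + x ^ 5 / 120 * (1 + x ^ 2 / 2)) ^ 2
      * (3 - x ^ 2) ≤ 3 * x ^ 2 * (1 - x ^ 4 / 24) ^ 2 := by
    have hp := aux_poly (x ^ 2) (sq_nonneg x) hx3
    calc ((x + x ^ 3 / 6) * (1 - x ^ 4 / 24) + x ^ 5 / 120 * (1 + x ^ 2 / 2)) ^ 2
          * (3 - x ^ 2)
        = x ^ 2 * (((1 + x ^ 2 / 6) * (1 - (x ^ 2) ^ 2 / 24)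
            + (x ^ 2) ^ 2 / 120 * (1 + x ^ 2 / 2)) ^ 2 * (3 - x ^ 2)) := by ring
      _ ≤ x ^ 2 * (3 * (1 - (x ^ 2) ^ 2 / 24) ^ 2) :=
          mul_le_mul_of_nonneg_left hp (sq_nonneg x)
      _ = 3 * x ^ 2 * (1 - x ^ 4 / 24) ^ 2 := by ring
  have hsD : 0 ≤ s * (1 - x ^ 4 / 24) := mul_nonneg hsnn hD.le
  have h3 : (s * (1 - x ^ 4 / 24)) ^ 2 * (3 - x ^ 2)
      ≤ 3 * x ^ 2 * (1 - x ^ 4 / 24) ^ 2 := by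
    have hsq : (s * (1 - x ^ 4 / 24)) ^ 2
        ≤ ((x + x ^ 3 / 6) * (1 - x ^ 4 / 24) + x ^ 5 / 120 * (1 + x ^ 2 / 2)) ^ 2 :=
      pow_le_pow_left₀ hsD h1 2
    calc (s * (1 - x ^ 4 / 24)) ^ 2 * (3 - x ^ 2)
        ≤ ((x + x ^ 3 / 6) * (1 - x ^ 4 / 24) + x ^ 5 / 120 * (1 + x ^ 2 / 2)) ^ 2
            * (3 - x ^ 2) := mul_le_mul_of_nonneg_right hsq (by linarith)
      _ ≤ 3 * x ^ 2 * (1 - x ^ 4 / 24) ^ 2 := h2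
  have hD2 : (0:ℝ) < (1 - x ^ 4 / 24) ^ 2 := by positivity
  nlinarith [h3]

noncomputable def langevinDeriv (x : ℝ) : ℝ :=
  if x = 0 then 1 / 3 else 1 / x ^ 2 - 1 / Real.sinh x ^ 2

theorem langevinDeriv_pos_le_third (x : ℝ) :
    0 < langevinDeriv x ∧ langevinDeriv x ≤ 1 / 3 := by
  rcases eq_or_ne x 0 with rfl | hx
  · norm_num [langevinDeriv]
  · rw [langevinDeriv, if_neg hx]
    have hxa : 0 < |x| := abs_pos.2 hx
    have hsa : |x| < Real.sinh |x| := Real.self_lt_sinh_iff.2 hxa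
    have hx2 : x ^ 2 = |x| ^ 2 := (sq_abs x).symm
    have hs2 : Real.sinh x ^ 2 = Real.sinh |x| ^ 2 := by
      rw [← sq_abs (Real.sinh x), Real.abs_sinh]
    have hx2pos : (0:ℝ) < x ^ 2 := by positivity
    have hs2pos : (0:ℝ) < Real.sinh x ^ 2 := by
      rw [hs2]; positivity
    have hlt : x ^ 2 < Real.sinh x ^ 2 := by
      rw [hx2, hs2]
      exact pow_lt_pow_left₀ hsa (abs_nonneg x) (by norm_num)
    constructor
    · have : 1 / Real.sinh x ^ 2 < 1 / x ^ 2 := by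
        apply one_div_lt_one_div_of_lt hx2pos hlt
      linarith
    · -- upper bound
      rcases le_or_gt (x ^ 2) 3 with h3 | h3
      · have hkey : Real.sinh |x| ^ 2 * (3 - |x| ^ 2) ≤ 3 * |x| ^ 2 :=
          aux_key |x| (abs_nonneg x) (by rwa [← hx2])
        rw [hx2, hs2] at *
        rw [div_sub_div _ _ (by positivity : |x| ^ 2 ≠ 0) (by positivity : Real.sinh |x| ^ 2 ≠ 0)]
        rw [div_le_div_iff₀ (by positivity) (by norm_num)]
        nlinarith [hkey]
      · have h1 : 1 / x ^ 2 < 1 / 3 := by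
          apply one_div_lt_one_div_of_lt (by norm_num) h3
        have h2 : 0 < 1 / Real.sinh x ^ 2 := by positivity
        linarith
end
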